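/- Let D ≡ 3 (mod 4) be a positive squarefree integer, c a positive divisor of D, (a b; c d) ∈ SL₂(ℤ) with lower-left entry the given c > 0, and x, y ∈ ℤ. Then Σ_{α, β ∈ ℤ/cℤ} e[(a(α² + αβ + ((D+1)/4)·β²) + (ax − y)·β)/c] equals c·G(ψ_c; a) if ax ≡ y (mod c), and equals 0 otherwise. -/

import Mathlib

open scoped Classical

/-- `e[x] = exp(2πix)`. -/
noncomputable def eC (x : ℂ) : ℂ := Complex.exp (2 * Real.pi * Complex.I * x)

section GaussAux
open Finset ZMod AddChar

lemma sum_range_eq_sum_zmod {n : ℕ} [NeZero n] (F : ZMod n → ℂ) :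
    ∑ t ∈ Finset.range n, F ((t : ℕ) : ZMod n) = ∑ z : ZMod n, F z := by
  refine Finset.sum_nbij' (fun t => ((t : ℕ) : ZMod n)) (fun z => z.val) ?_ ?_ ?_ ?_ ?_ <;>
    simp_all [ZMod.val_natCast_of_lt, ZMod.natCast_val, ZMod.val_lt, Finset.mem_range, Nat.mod_eq_of_lt]

lemma sum_stdAddChar_mul {n : ℕ} [NeZero n] (t : ZMod n) :
    ∑ i : ZMod n, ZMod.stdAddChar (t * i) = if t = 0 then (n : ℂ) else 0 := by
  split_ifs with h
  · simp [h]
  · exact AddChar.sum_eq_zero_of_ne_one (ZMod.isPrimitive_stdAddChar n h)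

lemma stdAddChar_split {m n : ℕ} [NeZero m] [NeZero n] {u v : ℤ}
    (huv : u * n + v * m = 1) (k : ℤ) :
    ZMod.stdAddChar ((k : ℤ) : ZMod (m * n)) =
      ZMod.stdAddChar ((u * k : ℤ) : ZMod m) * ZMod.stdAddChar ((v * k : ℤ) : ZMod n) := by
  rw [ZMod.stdAddChar_coe, ZMod.stdAddChar_coe, ZMod.stdAddChar_coe, ← Complex.exp_add]
  congr 1
  have hm : (m : ℂ) ≠ 0 := Nat.cast_ne_zero.mpr (NeZero.ne m)
  have hn : (n : ℂ) ≠ 0 := Nat.cast_ne_zero.mpr (NeZero.ne n)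
  have hc : (u : ℂ) * n + v * m = 1 := by exact_mod_cast congrArg (Int.cast : ℤ → ℂ) huv
  push_cast
  field_simp
  linear_combination (-(k:ℂ)) * hc

noncomputable def fQ (n : ℕ) [NeZero n] (a : ℤ) : ℂ :=
  ∑ z : ZMod n, ZMod.stdAddChar ((a : ZMod n) * z ^ 2)

noncomputable def gJ (n : ℕ) [NeZero n] (a : ℤ) : ℂ :=
  ∑ z : ZMod n, ((jacobiSym (z.val : ℤ) n : ℤ) : ℂ) * ZMod.stdAddChar ((a : ZMod n) * z)

lemma crt_symm_apply {m n : ℕ} [NeZero m] [NeZero n] (h : Nat.Coprime m n) {u v : ℤ}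
    (huv : u * n + v * m = 1) (z₁ : ZMod m) (z₂ : ZMod n) :
    (ZMod.chineseRemainder h).symm (z₁, z₂) =
      ((u * n * z₁.val + v * m * z₂.val : ℤ) : ZMod (m * n)) := by
  haveI : NeZero (m * n) := ⟨mul_ne_zero (NeZero.ne m) (NeZero.ne n)⟩
  set w : ℤ := u * n * z₁.val + v * m * z₂.val with hw
  apply (ZMod.chineseRemainder h).injective
  rw [RingEquiv.apply_symm_apply]
  have hmap : (ZMod.chineseRemainder h) ((w : ℤ) : ZMod (m * n)) =
      ((w : ZMod m), (w : ZMod n)) :=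
    map_intCast ((ZMod.chineseRemainder h) : ZMod (m*n) →+* ZMod m × ZMod n) w
  rw [hmap]
  have h1 : ((w : ℤ) : ZMod m) = z₁ := by
    have hmod : w ≡ (z₁.val : ℤ) [ZMOD (m : ℤ)] := by
      rw [Int.modEq_iff_dvd]; rw [dvd_sub_comm]
      exact ⟨v * (z₂.val - z₁.val), by linear_combination ((z₁.val : ℤ)) * huv⟩
    rw [(ZMod.intCast_eq_intCast_iff _ _ _).mpr hmod]
    push_cast
    simp [ZMod.natCast_val, ZMod.cast_id]
  have h2 : ((w : ℤ) : ZMod n) = z₂ := by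
    have hmod : w ≡ (z₂.val : ℤ) [ZMOD (n : ℤ)] := by
      rw [Int.modEq_iff_dvd]; rw [dvd_sub_comm]
      exact ⟨u * (z₁.val - z₂.val), by linear_combination ((z₂.val : ℤ)) * huv⟩
    rw [(ZMod.intCast_eq_intCast_iff _ _ _).mpr hmod]
    push_cast
    simp [ZMod.natCast_val, ZMod.cast_id]
  exact (Prod.ext h1 h2).symm

section mul
variable {m n : ℕ} [NeZero m] [NeZero n] {u v : ℤ}

lemma w_cast₁ (huv : u * n + v * m = 1) (z₁ : ZMod m) (z₂ : ZMod n) :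
    ((u * n * z₁.val + v * m * z₂.val : ℤ) : ZMod m) = z₁ := by
  have hmod : (u * n * z₁.val + v * m * z₂.val : ℤ) ≡ (z₁.val : ℤ) [ZMOD (m : ℤ)] := by
    rw [Int.modEq_iff_dvd]; rw [dvd_sub_comm]
    exact ⟨v * (z₂.val - z₁.val), by linear_combination ((z₁.val : ℤ)) * huv⟩
  rw [(ZMod.intCast_eq_intCast_iff _ _ _).mpr hmod]
  push_cast
  simp [ZMod.natCast_val, ZMod.cast_id]

lemma w_cast₂ (huv : u * n + v * m = 1) (z₁ : ZMod m) (z₂ : ZMod n) :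
    ((u * n * z₁.val + v * m * z₂.val : ℤ) : ZMod n) = z₂ := by
  have hmod : (u * n * z₁.val + v * m * z₂.val : ℤ) ≡ (z₂.val : ℤ) [ZMOD (n : ℤ)] := by
    rw [Int.modEq_iff_dvd]; rw [dvd_sub_comm]
    exact ⟨u * (z₁.val - z₂.val), by linear_combination ((z₂.val : ℤ)) * huv⟩
  rw [(ZMod.intCast_eq_intCast_iff _ _ _).mpr hmod]
  push_cast
  simp [ZMod.natCast_val, ZMod.cast_id]

lemma sum_zmod_mul (h : Nat.Coprime m n) (huv : u * n + v * m = 1) (G : ZMod (m * n) → ℂ) :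
    ∑ z : ZMod (m * n), G z =
      ∑ z₁ : ZMod m, ∑ z₂ : ZMod n,
        G ((u * n * z₁.val + v * m * z₂.val : ℤ) : ZMod (m * n)) := by
  haveI : NeZero (m * n) := ⟨mul_ne_zero (NeZero.ne m) (NeZero.ne n)⟩
  rw [← Equiv.sum_comp (ZMod.chineseRemainder h).symm.toEquiv G, Fintype.sum_prod_type]
  refine Finset.sum_congr rfl fun z₁ _ => Finset.sum_congr rfl fun z₂ _ => ?_
  rw [show (ZMod.chineseRemainder h).symm.toEquiv (z₁, z₂)
      = (ZMod.chineseRemainder h).symm (z₁, z₂) from rfl, crt_symm_apply h huv z₁ z₂]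

lemma fQ_mul (h : Nat.Coprime m n) (huv : u * n + v * m = 1) (a : ℤ) :
    fQ (m * n) a = fQ m (u * a) * fQ n (v * a) := by
  haveI : NeZero (m * n) := ⟨mul_ne_zero (NeZero.ne m) (NeZero.ne n)⟩
  rw [fQ, sum_zmod_mul h huv]
  rw [fQ, fQ, Finset.sum_mul_sum]
  refine Finset.sum_congr rfl fun z₁ _ => Finset.sum_congr rfl fun z₂ _ => ?_
  set w : ℤ := u * n * z₁.val + v * m * z₂.val with hwdef
  have key : ((a : ZMod (m * n)) * ((w : ℤ) : ZMod (m * n)) ^ 2)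
      = ((a * w ^ 2 : ℤ) : ZMod (m * n)) := by push_cast; ring
  rw [key, stdAddChar_split huv]
  congr 1
  · congr 1
    have : ((u * (a * w ^ 2) : ℤ) : ZMod m) = (u * a : ZMod m) * ((w : ℤ) : ZMod m) ^ 2 := by
      push_cast; ring
    rw [this, w_cast₁ huv z₁ z₂]; push_cast; ring
  · congr 1
    have : ((v * (a * w ^ 2) : ℤ) : ZMod n) = (v * a : ZMod n) * ((w : ℤ) : ZMod n) ^ 2 := by
      push_cast; ring
    rw [this, w_cast₂ huv z₁ z₂]; push_cast; ring

lemma gJ_mul (h : Nat.Coprime m n) (huv : u * n + v * m = 1) (a : ℤ) :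
    gJ (m * n) a = gJ m (u * a) * gJ n (v * a) := by
  haveI : NeZero (m * n) := ⟨mul_ne_zero (NeZero.ne m) (NeZero.ne n)⟩
  rw [gJ, sum_zmod_mul h huv]
  rw [gJ, gJ, Finset.sum_mul_sum]
  refine Finset.sum_congr rfl fun z₁ _ => Finset.sum_congr rfl fun z₂ _ => ?_
  set w : ℤ := u * n * z₁.val + v * m * z₂.val with hwdef
  have hJ : (jacobiSym ((((w : ℤ) : ZMod (m * n))).val : ℤ) (m * n) : ℤ)
      = jacobiSym (z₁.val : ℤ) m * jacobiSym (z₂.val : ℤ) n := by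
    have h0 : ((((((w : ℤ) : ZMod (m * n))).val : ℤ)) : ZMod (m*n)) = ((w : ℤ) : ZMod (m*n)) := by
      push_cast [ZMod.natCast_val, ZMod.cast_id]; rfl
    have hmod : (((w : ℤ) : ZMod (m * n))).val ≡ w [ZMOD ((m*n : ℕ) : ℤ)] :=
      (ZMod.intCast_eq_intCast_iff _ _ _).mp h0
    rw [jacobiSym.mod_left' hmod, jacobiSym.mul_right]
    have hm : w ≡ (z₁.val : ℤ) [ZMOD ((m : ℕ) : ℤ)] := by
      refine (ZMod.intCast_eq_intCast_iff _ _ _).mp ?_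
      rw [w_cast₁ huv z₁ z₂]
      push_cast [ZMod.natCast_val, ZMod.cast_id]; rfl
    have hn : w ≡ (z₂.val : ℤ) [ZMOD ((n : ℕ) : ℤ)] := by
      refine (ZMod.intCast_eq_intCast_iff _ _ _).mp ?_
      rw [w_cast₂ huv z₁ z₂]
      push_cast [ZMod.natCast_val, ZMod.cast_id]; rfl
    rw [jacobiSym.mod_left' hm, jacobiSym.mod_left' hn]
  have key : ((a : ZMod (m * n)) * ((w : ℤ) : ZMod (m * n)))
      = ((a * w : ℤ) : ZMod (m * n)) := by push_cast; ring
  rw [key, stdAddChar_split huv, hJ]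
  have e1 : ((u * (a * w) : ℤ) : ZMod m) = (u * a : ZMod m) * z₁ := by
    have : ((u * (a * w) : ℤ) : ZMod m) = (u * a : ZMod m) * ((w : ℤ) : ZMod m) := by
      push_cast; ring
    rw [this, w_cast₁ huv z₁ z₂]
  have e2 : ((v * (a * w) : ℤ) : ZMod n) = (v * a : ZMod n) * z₂ := by
    have : ((v * (a * w) : ℤ) : ZMod n) = (v * a : ZMod n) * ((w : ℤ) : ZMod n) := by
      push_cast; ring
    rw [this, w_cast₂ huv z₁ z₂]
  rw [e1, e2]
  push_cast
  ring

end mul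

lemma fQ_eq_gJ_prime {p : ℕ} [hp : Fact p.Prime] (hodd : p ≠ 2) {a : ℤ}
    (ha : ¬ ((p : ℤ) ∣ a)) : fQ p a = gJ p a := by
  have hA : (a : ZMod p) ≠ 0 := by
    rwa [Ne, ZMod.intCast_zmod_eq_zero_iff_dvd]
  have hchar : ringChar (ZMod p) ≠ 2 := by
    rw [ZMod.ringChar_zmod_n]; exact hodd
  have step1 : fQ p a = ∑ s : ZMod p,
      (((Finset.univ.filter (fun z : ZMod p => z ^ 2 = s)).card : ℂ)) *
        ZMod.stdAddChar ((a : ZMod p) * s) := by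
    rw [fQ, ← Finset.sum_fiberwise_of_maps_to' (g := fun z : ZMod p => z ^ 2)
      (fun z _ => Finset.mem_univ _) (fun s => ZMod.stdAddChar ((a : ZMod p) * s))]
    refine Finset.sum_congr rfl fun s _ => ?_
    rw [Finset.sum_const, nsmul_eq_mul]
  have card_eq : ∀ s : ZMod p,
      (((Finset.univ.filter (fun z : ZMod p => z ^ 2 = s)).card : ℂ))
        = ((quadraticChar (ZMod p) s : ℤ) : ℂ) + 1 := by
    intro s
    have h := quadraticChar_card_sqrts hchar s
    rw [Set.toFinset_setOf] at h
    exact_mod_cast congrArg (Int.cast : ℤ → ℂ) h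
  rw [step1]
  simp_rw [card_eq, add_mul, one_mul, Finset.sum_add_distrib]
  have hzero : ∑ s : ZMod p, ZMod.stdAddChar ((a : ZMod p) * s) = 0 := by
    rw [sum_stdAddChar_mul ((a : ZMod p))]
    simp [hA]
  rw [hzero, add_zero, gJ]
  refine Finset.sum_congr rfl fun z _ => ?_
  congr 2
  have hzz : (((z.val : ℤ)) : ZMod p) = z := by
    push_cast [ZMod.natCast_val, ZMod.cast_id]; rfl
  rw [← jacobiSym.legendreSym.to_jacobiSym, legendreSym, hzz]

lemma fQ_eq_gJ (n : ℕ) : ∀ (hn : n ≠ 0), Odd n → Squarefree n → ∀ a : ℤ,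
    IsCoprime a (n : ℤ) → @fQ n ⟨hn⟩ a = @gJ n ⟨hn⟩ a := by
  induction n using Nat.strong_induction_on with
  | _ n ih =>
    intro hn hodd hsf a ha
    haveI : NeZero n := ⟨hn⟩
    rcases eq_or_ne n 1 with rfl | hn1
    · rw [fQ, gJ]
      rw [Fintype.sum_subsingleton _ (0 : ZMod 1), Fintype.sum_subsingleton _ (0 : ZMod 1)]
      simp
    by_cases hp : n.Prime
    · haveI : Fact n.Prime := ⟨hp⟩
      apply fQ_eq_gJ_prime
      · rintro rfl; exact (Nat.not_odd_iff_even.mpr (by decide)) hodd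
      · intro hdvd
        have := ha.isUnit_of_dvd' hdvd dvd_rfl
        rw [Int.isUnit_iff] at this
        rcases this with h1 | h1 <;> omega
    · obtain ⟨p, hpp, hpd⟩ := Nat.exists_prime_and_dvd hn1
      obtain ⟨m, rfl⟩ := hpd
      obtain ⟨hco, hsfp, hsfm⟩ := Nat.squarefree_mul_iff.mp hsf
      have hp0 : p ≠ 0 := hpp.ne_zero
      have hm0 : m ≠ 0 := by rintro rfl; exact hn (by simp)
      have hm1 : m ≠ 1 := by rintro rfl; exact hp (by simpa using hpp)
      haveI : NeZero m := ⟨hm0⟩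
      haveI : NeZero p := ⟨hp0⟩
      have hiso : IsCoprime (p : ℤ) (m : ℤ) := by
        exact_mod_cast Nat.isCoprime_iff_coprime.mpr hco
      obtain ⟨u, v, huv⟩ := hiso
      have huv2 : v * (m : ℤ) + u * (p : ℤ) = 1 := by linarith
      have hoddp : Odd p := (Nat.odd_mul.mp hodd).1
      have hoddm : Odd m := (Nat.odd_mul.mp hodd).2
      have hap : IsCoprime a ((p : ℕ) : ℤ) := by
        have : IsCoprime a (((p * m : ℕ)) : ℤ) := ha
        push_cast at this
        exact this.of_mul_right_left
      have ham : IsCoprime a ((m : ℕ) : ℤ) := by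
        have : IsCoprime a (((p * m : ℕ)) : ℤ) := ha
        push_cast at this
        exact this.of_mul_right_right
      have hvp : IsCoprime v ((p : ℕ) : ℤ) := ⟨(m : ℤ), u, by linarith⟩
      have hum : IsCoprime u ((m : ℕ) : ℤ) := ⟨(p : ℤ), v, by linarith⟩
      have hltp : p < p * m := by
        have h2 : 1 < m := by omega
        nlinarith [Nat.pos_of_ne_zero hp0]
      have hltm : m < p * m := by
        have h2 : 1 < p := hpp.one_lt
        nlinarith [Nat.pos_of_ne_zero hm0]
      rw [fQ_mul hco huv2 a, gJ_mul hco huv2 a]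
      rw [ih p hltp hp0 hoddp hsfp (v * a) (hvp.mul_left hap),
        ih m hltm hm0 hoddm hsfm (u * a) (hum.mul_left ham)]

end GaussAux

open Finset ZMod AddChar in
theorem stmt_7 (D : ℕ) (hD3 : D % 4 = 3) (hDsf : Squarefree D)
    (c : ℕ) (hcpos : 0 < c) (hcD : c ∣ D)
    (a b d x y : ℤ) (hdet : a * d - b * (c : ℤ) = 1) :
    ∑ α ∈ Finset.range c, ∑ β ∈ Finset.range c,
        eC (((a : ℂ) * ((α : ℂ) ^ 2 + (α : ℂ) * (β : ℂ) +
              (((D + 1) / 4 : ℕ) : ℂ) * (β : ℂ) ^ 2) +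
            ((a : ℂ) * (x : ℂ) - (y : ℂ)) * (β : ℂ)) / (c : ℂ))
      = if a * x ≡ y [ZMOD (c : ℤ)] then
          (c : ℂ) * ∑ s ∈ Finset.range c,
            ((jacobiSym (s : ℤ) c : ℤ) : ℂ) * eC ((s : ℂ) * (a : ℂ) / (c : ℂ))
        else 0 := by
  haveI : NeZero c := ⟨hcpos.ne'⟩
  have hc0 : (c : ℂ) ≠ 0 := Nat.cast_ne_zero.mpr hcpos.ne'
  set k : ℕ := (D + 1) / 4 with hk
  set A : ZMod c := (a : ZMod c) with hA
  set K : ZMod c := (k : ZMod c) with hK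
  set M : ZMod c := ((a * x - y : ℤ) : ZMod c) with hM
  -- basic arithmetic facts
  have hoddD : Odd D := by rw [Nat.odd_iff]; omega
  have hoddc : Odd c := by
    rcases Nat.even_or_odd c with he | ho
    · exfalso
      obtain ⟨e, he'⟩ := he
      obtain ⟨f, hf⟩ := hcD
      rw [Nat.odd_iff] at hoddD
      have hD2 : D = 2 * (e * f) := by rw [hf, he']; ring
      omega
    · exact ho
  have hsfc : Squarefree c := hDsf.squarefree_of_dvd hcD
  have hacop : IsCoprime a ((c : ℕ) : ℤ) := ⟨d, -b, by linarith⟩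
  -- unit 2
  obtain ⟨w2, hw2⟩ : ∃ w2 : ZMod c, (2 : ZMod c) * w2 = 1 := by
    have : IsUnit (2 : ZMod c) := by
      have h2 : ((2 : ℕ) : ZMod c) = (2 : ZMod c) := by push_cast; rfl
      rw [← h2]
      exact (ZMod.isUnit_iff_coprime 2 c).mpr (Nat.coprime_two_left.mpr hoddc)
    obtain ⟨u, hu⟩ := this
    exact ⟨↑u⁻¹, by rw [← hu]; exact_mod_cast u.mul_inv⟩
  have h4K : (4 : ZMod c) * K = 1 := by
    have h44 : 4 * k = D + 1 := Nat.mul_div_cancel' (by omega) 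
    have : ((4 * k : ℕ) : ZMod c) = ((D + 1 : ℕ) : ZMod c) := by rw [h44]
    push_cast at this
    rw [hK]
    have hD0 : ((D : ℕ) : ZMod c) = 0 := (ZMod.natCast_eq_zero_iff D c).mpr hcD
    rw [this, hD0, zero_add]
  have h4w : (4 : ZMod c) * w2 ^ 2 = 1 := by linear_combination (2 * w2 + 1) * hw2
  have hKw : K = w2 ^ 2 := by linear_combination (-K) * h4w + w2 ^ 2 * h4K
  have hsq : ∀ z w : ZMod c, z ^ 2 + z * w + K * w ^ 2 = (z + w2 * w) ^ 2 := by
    intro z w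
    linear_combination (-(z * w)) * hw2 + w ^ 2 * hKw
  -- convert LHS
  have lhs_eq : ∑ α ∈ Finset.range c, ∑ β ∈ Finset.range c,
        eC (((a : ℂ) * ((α : ℂ) ^ 2 + (α : ℂ) * (β : ℂ) + ((k : ℕ) : ℂ) * (β : ℂ) ^ 2) +
            ((a : ℂ) * (x : ℂ) - (y : ℂ)) * (β : ℂ)) / (c : ℂ))
      = ∑ z : ZMod c, ∑ w : ZMod c,
          ZMod.stdAddChar (A * (z ^ 2 + z * w + K * w ^ 2) + M * w) := by
    have per : ∀ α β : ℕ,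
        eC (((a : ℂ) * ((α : ℂ) ^ 2 + (α : ℂ) * (β : ℂ) + ((k : ℕ) : ℂ) * (β : ℂ) ^ 2) +
            ((a : ℂ) * (x : ℂ) - (y : ℂ)) * (β : ℂ)) / (c : ℂ))
        = ZMod.stdAddChar (A * (((α : ZMod c)) ^ 2 + (α : ZMod c) * (β : ZMod c)
            + K * (β : ZMod c) ^ 2) + M * (β : ZMod c)) := by
      intro α β
      have hcast : (A * (((α : ZMod c)) ^ 2 + (α : ZMod c) * (β : ZMod c)
            + K * (β : ZMod c) ^ 2) + M * (β : ZMod c))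
          = (((a * (α ^ 2 + α * β + k * β ^ 2) + (a * x - y) * β : ℤ)) : ZMod c) := by
        rw [hA, hK, hM]; push_cast; ring
      rw [hcast, ZMod.stdAddChar_coe, eC]
      congr 1
      push_cast
      field_simp
    calc ∑ α ∈ Finset.range c, ∑ β ∈ Finset.range c,
        eC (((a : ℂ) * ((α : ℂ) ^ 2 + (α : ℂ) * (β : ℂ) + ((k : ℕ) : ℂ) * (β : ℂ) ^ 2) +
            ((a : ℂ) * (x : ℂ) - (y : ℂ)) * (β : ℂ)) / (c : ℂ))
        = ∑ α ∈ Finset.range c, ∑ β ∈ Finset.range c,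
          ZMod.stdAddChar (A * (((α : ZMod c)) ^ 2 + (α : ZMod c) * (β : ZMod c)
            + K * (β : ZMod c) ^ 2) + M * (β : ZMod c)) := by
          exact Finset.sum_congr rfl fun α _ => Finset.sum_congr rfl fun β _ => per α β
      _ = ∑ α ∈ Finset.range c, ∑ w : ZMod c,
          ZMod.stdAddChar (A * (((α : ZMod c)) ^ 2 + (α : ZMod c) * w
            + K * w ^ 2) + M * w) := by
          refine Finset.sum_congr rfl fun α _ => sum_range_eq_sum_zmod
            (F := fun w => ZMod.stdAddChar (A * (((α : ZMod c)) ^ 2 + (α : ZMod c) * w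
              + K * w ^ 2) + M * w))
      _ = _ := sum_range_eq_sum_zmod
          (F := fun z => ∑ w : ZMod c, ZMod.stdAddChar (A * (z ^ 2 + z * w + K * w ^ 2) + M * w))
  -- evaluate the double sum
  have eval : ∑ z : ZMod c, ∑ w : ZMod c,
        ZMod.stdAddChar (A * (z ^ 2 + z * w + K * w ^ 2) + M * w)
      = (if M = 0 then (c : ℂ) else 0) * fQ c a := by
    rw [Finset.sum_comm]
    have inner : ∀ w : ZMod c, ∑ z : ZMod c,
        ZMod.stdAddChar (A * (z ^ 2 + z * w + K * w ^ 2) + M * w)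
        = ZMod.stdAddChar (M * w) * fQ c a := by
      intro w
      have : ∀ z : ZMod c, ZMod.stdAddChar (A * (z ^ 2 + z * w + K * w ^ 2) + M * w)
          = ZMod.stdAddChar (M * w) * ZMod.stdAddChar (A * (z + w2 * w) ^ 2) := by
        intro z
        rw [hsq z w, ← AddChar.map_add_eq_mul, add_comm]
      simp_rw [this, ← Finset.mul_sum]
      congr 1
      rw [fQ]
      exact Equiv.sum_comp (Equiv.addRight (w2 * w))
        (fun z => ZMod.stdAddChar (A * z ^ 2))
    simp_rw [inner, ← Finset.sum_mul]
    rw [sum_stdAddChar_mul M]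
  rw [lhs_eq, eval]
  -- the condition
  have hcond : (M = 0) ↔ (a * x ≡ y [ZMOD (c : ℤ)]) := by
    rw [hM, ZMod.intCast_zmod_eq_zero_iff_dvd]
    constructor
    · intro h; rw [Int.modEq_iff_dvd]; exact (dvd_sub_comm).mp h
    · intro h; exact (dvd_sub_comm).mp (Int.modEq_iff_dvd.mp h)
  -- RHS conversion
  have rhs_eq : ∑ s ∈ Finset.range c,
      ((jacobiSym (s : ℤ) c : ℤ) : ℂ) * eC ((s : ℂ) * (a : ℂ) / (c : ℂ)) = gJ c a := by
    have per : ∀ s ∈ Finset.range c,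
        ((jacobiSym (s : ℤ) c : ℤ) : ℂ) * eC ((s : ℂ) * (a : ℂ) / (c : ℂ))
        = ((jacobiSym (((s : ZMod c)).val : ℤ) c : ℤ) : ℂ)
            * ZMod.stdAddChar (A * ((s : ℕ) : ZMod c)) := by
      intro s hs
      rw [Finset.mem_range] at hs
      rw [ZMod.val_natCast_of_lt hs]
      congr 1
      have hcast : A * ((s : ℕ) : ZMod c) = ((a * s : ℤ) : ZMod c) := by
        rw [hA]; push_cast; ring
      rw [hcast, ZMod.stdAddChar_coe, eC]
      congr 1
      push_cast
      ring
    rw [Finset.sum_congr rfl per, gJ]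
    exact sum_range_eq_sum_zmod
      (F := fun z : ZMod c => ((jacobiSym ((z.val : ℕ) : ℤ) c : ℤ) : ℂ)
        * ZMod.stdAddChar (A * z))
  have hfg : fQ c a = gJ c a := fQ_eq_gJ c hcpos.ne' hoddc hsfc a hacop
  rw [hfg]
  split_ifs with h1 h2 h2
  · rw [rhs_eq]
  · exact absurd (hcond.mp h1) h2
  · exact absurd (hcond.mpr h2) h1
  · simp
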